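/- arXiv:2105.03697 — 3 statements merged into one kernel-verified Lean document; each statement's English description precedes it below -/
import Mathlib

section
/- A linear code C ⊆ F_2^n (a subspace) is k-wise independent if and only if its dual code C^⊥ has minimum Hamming weight greater than k; i.e., if C^⊥ has minimum distance > k, then for any set I ⊂ [n] of size k and any y ∈ {0,1}^k, the number of codewords x ∈ C with x restricted to I equal to y is exactly |C|/2^k. -/
open scoped Classical

open Finset

private lemma aux_surj {n k : ℕ} (C : Submodule (ZMod 2) (Fin n → ZMod 2))
    (I : Finset (Fin n)) (hI : I.card = k)
    (hA : ∀ y : Fin n → ZMod 2, y ≠ 0 → (∀ x ∈ C, ∑ i, x i * y i = 0) →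
        k < hammingDist y 0) :
    ∀ v : {i // i ∈ I} → ZMod 2, ∃ x ∈ C, ∀ i : {i // i ∈ I}, x i = v i := by
  set f : (Fin n → ZMod 2) →ₗ[ZMod 2] ({i // i ∈ I} → ZMod 2) :=
    LinearMap.funLeft (ZMod 2) (ZMod 2) (fun i : {i // i ∈ I} => (i : Fin n)) with hf
  set W := C.map f with hW
  have hWtop : W = ⊤ := by
    by_contra hne
    obtain ⟨φ, hφ0, hφ⟩ :=
      Submodule.exists_dual_map_eq_bot_of_lt_top (lt_top_iff_ne_top.2 hne)
        inferInstance
    set c : {i // i ∈ I} → ZMod 2 := fun i => φ (Pi.single i 1) with hc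
    have hφeq : ∀ v : {i // i ∈ I} → ZMod 2, φ v = ∑ i, v i * c i := by
      intro v
      conv_lhs => rw [pi_eq_sum_univ v]
      rw [map_sum]
      refine Finset.sum_congr rfl fun i _ => ?_
      rw [map_smul, smul_eq_mul]
      congr 2
      ext j
      simp [Pi.single_apply, eq_comm]
    have hcne : ∃ i, c i ≠ 0 := by
      by_contra hall
      push_neg at hall
      apply hφ0
      ext v
      simp only [LinearMap.comp_apply, LinearMap.single_apply, LinearMap.zero_apply]
      rw [hφeq]
      simp [hall]
    obtain ⟨i₀, hi₀⟩ := hcne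
    set y : Fin n → ZMod 2 := fun j => if h : j ∈ I then c ⟨j, h⟩ else 0 with hy
    have hyne : y ≠ 0 := by
      intro h0
      apply hi₀
      have := congrFun h0 (i₀ : Fin n)
      simpa [hy, i₀.2] using this
    have horth : ∀ x ∈ C, ∑ i, x i * y i = 0 := by
      intro x hx
      have h1 : ∑ i, x i * y i = ∑ j ∈ I, x j * y j := by
        refine (Finset.sum_subset I.subset_univ ?_).symm
        intro j _ hj
        simp [hy, hj]
      have h2 : ∑ j ∈ I, x j * y j = ∑ i : {i // i ∈ I}, x i * c i := by
        rw [← Finset.sum_attach I (fun j => x j * y j)]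
        refine Finset.sum_congr rfl fun i _ => ?_
        simp [hy, i.2]
      have h3 : φ (f x) = 0 := by
        have : f x ∈ W := Submodule.mem_map_of_mem hx
        have := Submodule.mem_map_of_mem (f := φ) this
        rw [hφ] at this
        exact (Submodule.mem_bot (ZMod 2)).1 this
      rw [h1, h2, ← h3, hφeq]
      rfl
    have hwt := hA y hyne horth
    have : hammingDist y 0 ≤ k := by
      rw [hammingDist_zero_right, hammingNorm]
      calc #{i | y i ≠ 0} ≤ I.card := by
            apply Finset.card_le_card
            intro j hj
            simp only [Finset.mem_filter, Finset.mem_univ, true_and] at hj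
            by_contra hjI
            exact hj (by simp [hy, hjI])
        _ = k := hI
    omega
  intro v
  have hv : v ∈ W := hWtop ▸ Submodule.mem_top
  obtain ⟨x, hx, hxv⟩ := hv
  exact ⟨x, hx, fun i => by rw [← hxv]; rfl⟩

/-- **k-wise independence ↔ dual distance.** A linear code `C ⊆ F₂ⁿ` is
`k`-wise independent (i.e., for every index set `I` of size `k` and every
pattern `y`, exactly `|C|/2ᵏ` codewords restrict to `y` on `I`) if and only if
every nonzero vector of the dual code `C⊥` has Hamming weight greater than
`k`. -/
theorem stmt6 (n k : ℕ) (hk : k ≤ n) (C : Submodule (ZMod 2) (Fin n → ZMod 2)) :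
    (∀ y : Fin n → ZMod 2, y ≠ 0 → (∀ x ∈ C, ∑ i, x i * y i = 0) →
        k < hammingDist y 0)
      ↔ (∀ I : Finset (Fin n), I.card = k → ∀ y : Fin n → ZMod 2,
          (Finset.univ.filter
              (fun x : Fin n → ZMod 2 => x ∈ C ∧ ∀ i ∈ I, x i = y i)).card * 2 ^ k
            = Nat.card C) := by
  constructor
  · intro hA I hI y
    have hs := aux_surj C I hI hA
    set F : ({i // i ∈ I} → ZMod 2) → Finset (Fin n → ZMod 2) :=
      fun v => Finset.univ.filter
        (fun x => x ∈ C ∧ ∀ i : {i // i ∈ I}, x i = v i) with hF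
    -- all fibers have the same cardinality
    have hcard : ∀ v w, (F v).card = (F w).card := by
      intro v w
      obtain ⟨d, hdC, hd⟩ := hs (w - v)
      refine Finset.card_bij' (fun x _ => x + d) (fun x _ => x - d) ?_ ?_ ?_ ?_
      · intro a ha
        simp only [hF, Finset.mem_filter, Finset.mem_univ, true_and] at ha ⊢
        refine ⟨C.add_mem ha.1 hdC, fun i => ?_⟩
        have := hd i
        have h2 := ha.2 i
        simp only [Pi.add_apply]
        rw [h2, this]
        simp [Pi.sub_apply]
      · intro a ha
        simp only [hF, Finset.mem_filter, Finset.mem_univ, true_and] at ha ⊢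
        refine ⟨C.sub_mem ha.1 hdC, fun i => ?_⟩
        have := hd i
        have h2 := ha.2 i
        simp only [Pi.sub_apply]
        rw [h2, this]
        simp [Pi.sub_apply]
      · intro a _; simp
      · intro a _; simp
    -- Nat.card C equals sum of fiber cards
    have htotal : Nat.card C = ∑ v : {i // i ∈ I} → ZMod 2, (F v).card := by
      rw [Nat.card_eq_fintype_card, Fintype.card_subtype]
      rw [Finset.card_eq_sum_card_fiberwise
        (f := fun x (i : {i // i ∈ I}) => x i) (t := Finset.univ)
        (fun x _ => Finset.mem_univ _)]
      refine Finset.sum_congr rfl fun v _ => ?_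
      congr 1
      rw [Finset.filter_filter]
      refine Finset.filter_congr fun x _ => ?_
      constructor
      · rintro ⟨h1, h2⟩; exact ⟨h1, fun i => congrFun h2 i⟩
      · rintro ⟨h1, h2⟩; exact ⟨h1, funext h2⟩
    set v₀ : {i // i ∈ I} → ZMod 2 := fun i => y i with hv₀
    have hsum : ∑ v : {i // i ∈ I} → ZMod 2, (F v).card = 2 ^ k * (F v₀).card := by
      rw [Finset.sum_congr rfl (fun v _ => hcard v v₀), Finset.sum_const,
        smul_eq_mul]
      congr 1
      simp [Fintype.card_fun, Fintype.card_coe, hI]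
    have hSF : (Finset.univ.filter
        (fun x : Fin n → ZMod 2 => x ∈ C ∧ ∀ i ∈ I, x i = y i)) = F v₀ := by
      refine Finset.filter_congr fun x _ => ?_
      constructor
      · rintro ⟨h1, h2⟩; exact ⟨h1, fun i => h2 i i.2⟩
      · rintro ⟨h1, h2⟩; exact ⟨h1, fun i hi => h2 ⟨i, hi⟩⟩
    rw [hSF, htotal, hsum, mul_comm]
  · intro hB y hy horth
    by_contra hwt
    push_neg at hwt
    rw [hammingDist_zero_right, hammingNorm] at hwt
    obtain ⟨I, hsub, hIcard⟩ :=
      Finset.exists_superset_card_eq (s := {i | y i ≠ 0}) hwt (by simpa using hk)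
    obtain ⟨i₀, hi₀⟩ : ∃ i, y i ≠ 0 := by
      by_contra hall; push_neg at hall; exact hy (funext hall)
    have hkey := hB I hIcard (fun j => if j = i₀ then 1 else 0)
    have hpos : 0 < Nat.card C := Nat.card_pos
    have hne : (Finset.univ.filter
        (fun x : Fin n → ZMod 2 => x ∈ C ∧ ∀ i ∈ I,
          x i = if i = i₀ then 1 else 0)).Nonempty := by
      rw [← Finset.card_pos]
      by_contra h
      push_neg at h
      interval_cases h' : (Finset.univ.filter (fun x : Fin n → ZMod 2 =>
        x ∈ C ∧ ∀ i ∈ I, x i = if i = i₀ then 1 else 0)).card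
      all_goals simp_all
    obtain ⟨x, hx⟩ := hne
    simp only [Finset.mem_filter, Finset.mem_univ, true_and] at hx
    obtain ⟨hxC, hxI⟩ := hx
    have h0 := horth x hxC
    have hi₀I : i₀ ∈ I := hsub (by simp [hi₀])
    have h1 : ∑ i, x i * y i = ∑ j ∈ I, x j * y j := by
      refine (Finset.sum_subset I.subset_univ ?_).symm
      intro j _ hj
      have : y j = 0 := by
        by_contra hyj
        exact hj (hsub (by simp [hyj]))
      simp [this]
    have h2 : ∑ j ∈ I, x j * y j = y i₀ := by
      rw [Finset.sum_congr rfl (fun j hj => by rw [hxI j hj])]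
      simp only [ite_mul, one_mul, zero_mul]
      rw [Finset.sum_ite_eq' I i₀ y]
      simp [hi₀I]
    rw [h1, h2] at h0
    exact hi₀ h0
end

section
/- Let Π ⊆ {1,-1}^n and C ⊆ {1,-1}^n be two disjoint sets, each of which is k-wise independent, and suppose every element of C is ε-far from Π in relative Hamming distance. Define the partial function f with f(x) = -1 for x ∈ Π and f(x) = 1 for x ε-far from Π. Then the threshold degree of f is at least k. -/
open scoped Classical

/-- A set `S ⊆ {1,-1}ⁿ` is `k`-wise independent: the restriction of a uniform
element of `S` to any `k` coordinates is uniform on `{1,-1}ᵏ`. -/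
def kwiseIndep (n k : ℕ) (S : Finset (Fin n → ℝ)) : Prop :=
  ∀ I : Finset (Fin n), I.card = k → ∀ y : Fin n → ℝ,
    (∀ i, y i = 1 ∨ y i = -1) →
    (S.filter (fun x => ∀ i ∈ I, x i = y i)).card * 2 ^ k = S.card

/-- Key lemma: over a `k`-wise independent subset of the cube, any nonempty
multilinear monomial of degree at most `k` sums to zero. -/
lemma sum_prod_eq_zero_of_kwise (n k : ℕ) (hk : k ≤ n) (S : Finset (Fin n → ℝ))
    (hcube : ∀ x ∈ S, ∀ i, x i = 1 ∨ x i = -1) (hind : kwiseIndep n k S)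
    (J : Finset (Fin n)) (hJne : J.Nonempty) (hJk : J.card ≤ k) :
    ∑ x ∈ S, ∏ j ∈ J, x j = 0 := by
  obtain ⟨I, hJI, _, hIcard⟩ :=
    Finset.exists_subsuperset_card_eq (Finset.subset_univ J) hJk
      (by simpa using hk)
  -- classify points of S by the set of coordinates in I where they are -1
  have hmap : ∀ x ∈ S, (I.filter (fun i => x i = -1)) ∈ I.powerset := by
    intro x _; exact Finset.mem_powerset.2 (Finset.filter_subset _ _)
  rw [← Finset.sum_fiberwise_of_maps_to hmap (fun x => ∏ j ∈ J, x j)]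
  -- each fiber contributes (|S|/2^k) · ∏_{j∈J} (±1)
  have hfiber : ∀ T ∈ I.powerset,
      ∑ x ∈ S.filter (fun x => I.filter (fun i => x i = -1) = T), ∏ j ∈ J, x j
        = ((S.card : ℝ) / 2 ^ k) * ∏ j ∈ J, (if j ∈ T then (-1 : ℝ) else 1) := by
    intro T hT
    have hTI : T ⊆ I := Finset.mem_powerset.1 hT
    set y : Fin n → ℝ := fun i => if i ∈ T then -1 else 1 with hy
    have hycube : ∀ i, y i = 1 ∨ y i = -1 := by
      intro i; by_cases h : i ∈ T <;> simp [hy, h]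
    -- the fiber is exactly the filter appearing in kwiseIndep
    have hset : S.filter (fun x => I.filter (fun i => x i = -1) = T)
        = S.filter (fun x => ∀ i ∈ I, x i = y i) := by
      apply Finset.filter_congr
      intro x hx
      constructor
      · intro h i hi
        by_cases hiT : i ∈ T
        · have : i ∈ I.filter (fun i => x i = -1) := h ▸ hiT
          simp only [Finset.mem_filter] at this
          simp [hy, hiT, this.2]
        · have : i ∉ I.filter (fun i => x i = -1) := h ▸ hiT
          simp only [Finset.mem_filter, hi, true_and] at this
          rcases hcube x hx i with h1 | h1
          · simp [hy, hiT, h1]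
          · exact absurd h1 this
      · intro h
        ext i
        simp only [Finset.mem_filter]
        constructor
        · rintro ⟨hiI, hxi⟩
          by_contra hiT
          have := h i hiI
          rw [hy] at this
          simp only [hiT, if_false] at this
          rw [this] at hxi; norm_num at hxi
        · intro hiT
          refine ⟨hTI hiT, ?_⟩
          have := h i (hTI hiT)
          rw [hy] at this
          simpa [hiT] using this
    have hcard := hind I hIcard y hycube
    have hcardR : ((S.filter (fun x => I.filter (fun i => x i = -1) = T)).card : ℝ)
        = (S.card : ℝ) / 2 ^ k := by
      rw [hset]
      have h2 : (0 : ℝ) < 2 ^ k := by positivity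
      field_simp
      exact_mod_cast hcard
    have hx_eq : ∀ x ∈ S.filter (fun x => I.filter (fun i => x i = -1) = T),
        ∏ j ∈ J, x j = ∏ j ∈ J, (if j ∈ T then (-1 : ℝ) else 1) := by
      intro x hx
      rw [hset] at hx
      simp only [Finset.mem_filter] at hx
      refine Finset.prod_congr rfl fun j hj => ?_
      have := hx.2 j (hJI hj)
      rw [hy] at this
      exact this
    rw [Finset.sum_congr rfl hx_eq, Finset.sum_const, nsmul_eq_mul, hcardR]
  rw [Finset.sum_congr rfl hfiber, ← Finset.mul_sum]
  -- the sum over T ⊆ I of the signs is zero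
  have hzero : ∑ T ∈ I.powerset, ∏ j ∈ J, (if j ∈ T then (-1 : ℝ) else 1) = 0 := by
    have hrw : ∀ T ∈ I.powerset, ∏ j ∈ J, (if j ∈ T then (-1 : ℝ) else 1)
        = (∏ i ∈ T, (if i ∈ J then (-1 : ℝ) else 1)) * ∏ i ∈ I \ T, (1 : ℝ) := by
      intro T hT
      have hTI : T ⊆ I := Finset.mem_powerset.1 hT
      rw [Finset.prod_const_one, mul_one]
      rw [show (∏ j ∈ J, (if j ∈ T then (-1 : ℝ) else 1))
          = ∏ j ∈ J, (if j ∈ T then (if j ∈ J then (-1:ℝ) else 1) else 1) from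
        Finset.prod_congr rfl fun j hj => by simp [hj]]
      rw [Finset.prod_subset hJI (by intro i _ hiJ; simp [hiJ])]
      rw [Finset.prod_ite_mem, Finset.inter_eq_right.2 hTI]
    rw [Finset.sum_congr rfl hrw, ← Finset.prod_add]
    obtain ⟨j0, hj0⟩ := hJne
    exact Finset.prod_eq_zero (hJI hj0) (by simp [hj0])
  rw [hzero, mul_zero]

/-- **Hard instances from k-wise independent sets.** If `Π, C ⊆ {1,-1}ⁿ` are
disjoint, nonempty, `k`-wise independent, and every element of `C` is `ε`-far
from `Π` in relative Hamming distance, then every real polynomial that is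
negative on `Π` and positive on all points of the cube `ε`-far from `Π` has
degree at least `k`; i.e. the threshold degree of the associated partial
function is at least `k`. -/
theorem stmt7 (n k : ℕ) (hk : k ≤ n) (ε : ℝ) (hε : 0 < ε)
    (Pi C : Finset (Fin n → ℝ))
    (hPicube : ∀ x ∈ Pi, ∀ i, x i = 1 ∨ x i = -1)
    (hCcube : ∀ x ∈ C, ∀ i, x i = 1 ∨ x i = -1)
    (hPine : Pi.Nonempty) (hCne : C.Nonempty)
    (hdisj : Disjoint Pi C)
    (hPind : kwiseIndep n k Pi) (hCind : kwiseIndep n k C)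
    (hfar : ∀ x ∈ C, ∀ z ∈ Pi,
      ε ≤ ((Finset.univ.filter (fun i : Fin n => x i ≠ z i)).card : ℝ) / n)
    (p : MvPolynomial (Fin n) ℝ)
    (hneg : ∀ x ∈ Pi, MvPolynomial.eval x p < 0)
    (hpos : ∀ x : Fin n → ℝ, (∀ i, x i = 1 ∨ x i = -1) →
      (∀ z ∈ Pi, ε ≤ ((Finset.univ.filter (fun i : Fin n => x i ≠ z i)).card : ℝ) / n) →
      0 < MvPolynomial.eval x p) :
    k ≤ p.totalDegree := by
  by_contra hlt
  push_neg at hlt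
  set c : ℝ := ∑ d ∈ p.support.filter
      (fun d => d.support.filter (fun i => Odd (d i)) = ∅), p.coeff d with hc
  have key : ∀ S : Finset (Fin n → ℝ), (∀ x ∈ S, ∀ i, x i = 1 ∨ x i = -1) →
      kwiseIndep n k S →
      ∑ x ∈ S, MvPolynomial.eval x p = c * S.card := by
    intro S hcube hind
    have heval : ∀ x ∈ S, MvPolynomial.eval x p
        = ∑ d ∈ p.support, p.coeff d *
            ∏ i ∈ d.support.filter (fun i => Odd (d i)), x i := by
      intro x hx
      rw [MvPolynomial.eval_eq]
      refine Finset.sum_congr rfl fun d _ => ?_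
      congr 1
      rw [Finset.prod_filter]
      refine Finset.prod_congr rfl fun i _ => ?_
      rcases Nat.even_or_odd (d i) with he | ho
      · rcases hcube x hx i with h1 | h1 <;>
          simp [h1, he, Nat.not_odd_iff_even.2 he, he.neg_one_pow]
      · rcases hcube x hx i with h1 | h1 <;> simp [h1, ho, ho.neg_one_pow]
    rw [Finset.sum_congr rfl heval, Finset.sum_comm]
    have hterm : ∀ d ∈ p.support,
        ∑ x ∈ S, p.coeff d * ∏ i ∈ d.support.filter (fun i => Odd (d i)), x i
        = if d.support.filter (fun i => Odd (d i)) = ∅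
            then p.coeff d * S.card else 0 := by
      intro d hd
      rw [← Finset.mul_sum]
      by_cases hJ : d.support.filter (fun i => Odd (d i)) = ∅
      · simp [hJ]
      · rw [if_neg hJ]
        have hJne : (d.support.filter (fun i => Odd (d i))).Nonempty :=
          Finset.nonempty_iff_ne_empty.2 hJ
        have hJk : (d.support.filter (fun i => Odd (d i))).card ≤ k := by
          have h1 : (d.support.filter (fun i => Odd (d i))).card ≤ d.support.card :=
            Finset.card_filter_le _ _
          have h2 : d.support.card ≤ d.sum fun _ e => e := by
            rw [Finset.card_eq_sum_ones, Finsupp.sum]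
            refine Finset.sum_le_sum fun i hi => ?_
            exact Nat.one_le_iff_ne_zero.2 (Finsupp.mem_support_iff.1 hi)
          have h3 : d.sum (fun _ e => e) ≤ p.totalDegree :=
            MvPolynomial.le_totalDegree hd
          omega
        rw [sum_prod_eq_zero_of_kwise n k hk S hcube hind _ hJne hJk, mul_zero]
    rw [Finset.sum_congr rfl hterm, ← Finset.sum_filter, hc, Finset.sum_mul]
  have hPi := key Pi hPicube hPind
  have hC := key C hCcube hCind
  have hPisum : ∑ x ∈ Pi, MvPolynomial.eval x p < 0 := by
    have := Finset.sum_lt_sum_of_nonempty hPine (g := fun _ => (0:ℝ)) hneg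
    simpa using this
  have hCsum : 0 < ∑ x ∈ C, MvPolynomial.eval x p := by
    refine Finset.sum_pos (fun x hx => hpos x (hCcube x hx) (hfar x hx)) hCne
  have hPicard : (0 : ℝ) < Pi.card := by
    exact_mod_cast Finset.card_pos.2 hPine
  have hCcard : (0 : ℝ) < C.card := by
    exact_mod_cast Finset.card_pos.2 hCne
  rw [hPi] at hPisum
  rw [hC] at hCsum
  nlinarith
end

section
/- Any interactive-proof verifier that, when interacting with an honest prover, accepts every n-bit string of even parity with probability at least 2/3, and, when interacting with any (possibly malicious) prover, rejects every string of odd parity with probability at least 2/3, must make at least n/3 oracle queries to its input on some input. -/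
open scoped Classical

/-- Decision trees querying bits of an `n`-bit string. -/
inductive DTree (n : ℕ) : Type
  | leaf : Bool → DTree n
  | node : Fin n → DTree n → DTree n → DTree n

/-- Depth of a decision tree. -/
def DTree.depth {n : ℕ} : DTree n → ℕ
  | .leaf _ => 0
  | .node _ l r => max l.depth r.depth + 1

/-- Evaluation of a decision tree on an input `x ∈ {0,1}ⁿ`. -/
def DTree.eval {n : ℕ} : DTree n → (Fin n → Bool) → Bool
  | .leaf b, _ => b
  | .node i l r, x => if x i then l.eval x else r.eval x

/-- The parity of a bit string. -/
def parity {n : ℕ} (x : Fin n → Bool) : Bool :=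
  decide ((Finset.univ.filter (fun i => x i = true)).card % 2 = 1)

/-- The set of coordinates queried on input `x`. -/
def DTree.queriesOn {n : ℕ} : DTree n → (Fin n → Bool) → Finset (Fin n)
  | .leaf _, _ => ∅
  | .node i l r, x => insert i (if x i then l.queriesOn x else r.queriesOn x)

lemma DTree.card_queriesOn {n : ℕ} (t : DTree n) (x : Fin n → Bool) :
    (t.queriesOn x).card ≤ t.depth := by
  induction t with
  | leaf b => simp [queriesOn, depth]
  | node i l r hl hr =>
    simp only [queriesOn, depth]
    refine (Finset.card_insert_le _ _).trans ?_
    by_cases h : x i <;> simp [h] <;> omega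

lemma DTree.eval_eq_of_agree {n : ℕ} (t : DTree n) (x y : Fin n → Bool)
    (h : ∀ j ∈ t.queriesOn x, y j = x j) : t.eval y = t.eval x := by
  induction t with
  | leaf b => rfl
  | node i l r hl hr =>
    have hi : y i = x i := h i (Finset.mem_insert_self _ _)
    simp only [eval, hi]
    by_cases hx : x i
    · simp only [hx, if_true]
      exact hl (fun j hj => h j (by simp [queriesOn, hx, hj]))
    · simp only [hx, if_false]
      exact hr (fun j hj => h j (by simp [queriesOn, hx, hj]))

/-- **IPs for parity need n/3 queries.** Model an interactive-proof verifier
with `r` random bits and query complexity `q` as follows: each random string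
`ρ` and prover strategy `p` (ranging over an abstract nonempty type of
strategies) jointly determine a depth-`≤ q` decision tree of oracle queries to
`x` whose output is the verdict. If every even-parity `x` is accepted with
probability at least `2/3` for some prover, and every odd-parity `x` is
accepted with probability at most `1/3` for every prover, then `q ≥ n/3`. -/
theorem stmt16 (n r q : ℕ) (P : Type*) (hP : Nonempty P)
    (tree : (Fin r → Bool) → P → DTree n)
    (hdepth : ∀ ρ p, (tree ρ p).depth ≤ q)
    (hcomplete : ∀ x : Fin n → Bool, parity x = false → ∃ p : P,
      (2 : ℝ) / 3 ≤
        ((Finset.univ.filter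
            (fun ρ : Fin r → Bool => (tree ρ p).eval x = true)).card : ℝ) / 2 ^ r)
    (hsound : ∀ x : Fin n → Bool, parity x = true → ∀ p : P,
      ((Finset.univ.filter
          (fun ρ : Fin r → Bool => (tree ρ p).eval x = true)).card : ℝ) / 2 ^ r ≤ 1 / 3) :
    (n : ℝ) / 3 ≤ q := by
  by_contra hlt
  push_neg at hlt
  have hnq : 3 * q < n := by
    have h3 : (3 * q : ℝ) < n := by linarith
    exact_mod_cast h3
  have hpow : (0 : ℕ) < 2 ^ r := Nat.pow_pos (by norm_num)
  have hpowR : (0 : ℝ) < 2 ^ r := by positivity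
  -- the all-zeros input
  set x : Fin n → Bool := fun _ => false with hxdef
  have hpx : parity x = false := by simp [parity, hxdef]
  obtain ⟨p, hp⟩ := hcomplete x hpx
  -- counting argument
  have hsum : ∑ i : Fin n,
      (Finset.univ.filter (fun ρ : Fin r → Bool => i ∈ (tree ρ p).queriesOn x)).card
      ≤ q * 2 ^ r := by
    have heq : ∑ i : Fin n,
        (Finset.univ.filter (fun ρ : Fin r → Bool => i ∈ (tree ρ p).queriesOn x)).card
        = ∑ ρ : Fin r → Bool, ((tree ρ p).queriesOn x).card := by
      simp only [Finset.card_filter]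
      rw [Finset.sum_comm]
      refine Finset.sum_congr rfl (fun ρ _ => ?_)
      rw [← Finset.card_filter]
      congr 1
      exact Finset.filter_univ_mem _
    rw [heq]
    calc ∑ ρ : Fin r → Bool, ((tree ρ p).queriesOn x).card
        ≤ ∑ _ρ : Fin r → Bool, q :=
          Finset.sum_le_sum (fun ρ _ => ((tree ρ p).card_queriesOn x).trans (hdepth ρ p))
      _ = q * 2 ^ r := by simp [Finset.card_univ, mul_comm]
  -- find a rarely queried coordinate
  obtain ⟨i, hi⟩ : ∃ i : Fin n,
      3 * (Finset.univ.filter (fun ρ : Fin r → Bool => i ∈ (tree ρ p).queriesOn x)).card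
        < 2 ^ r := by
    by_contra hc
    push_neg at hc
    have h1 : n * 2 ^ r ≤ 3 * ∑ i : Fin n,
        (Finset.univ.filter (fun ρ : Fin r → Bool => i ∈ (tree ρ p).queriesOn x)).card := by
      rw [Finset.mul_sum]
      calc n * 2 ^ r = ∑ _i : Fin n, 2 ^ r := by simp [Finset.card_univ, mul_comm]
        _ ≤ _ := Finset.sum_le_sum (fun i _ => hc i)
    have h2 : n * 2 ^ r ≤ 3 * (q * 2 ^ r) := h1.trans (by omega)
    have h3 : 3 * (q * 2 ^ r) < n * 2 ^ r := by
      rw [← mul_assoc]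
      exact (Nat.mul_lt_mul_right hpow).mpr hnq
    exact lt_irrefl _ (h2.trans_lt h3)
  -- the flipped input
  set y : Fin n → Bool := Function.update x i true with hydef
  have hfy : Finset.univ.filter (fun j => y j = true) = {i} := by
    ext j
    simp only [Finset.mem_filter, Finset.mem_univ, true_and, Finset.mem_singleton, hydef]
    constructor
    · intro h
      by_contra hne
      rw [Function.update_of_ne hne] at h
      simp [hxdef] at h
    · intro h; subst h; simp
  have hpy : parity y = true := by
    simp [parity, hfy]
  have hsy := hsound y hpy p
  -- accepted-on-x but not-querying-i implies accepted-on-y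
  set Ax := Finset.univ.filter (fun ρ : Fin r → Bool => (tree ρ p).eval x = true) with hAx
  set Ay := Finset.univ.filter (fun ρ : Fin r → Bool => (tree ρ p).eval y = true) with hAy
  set B := Finset.univ.filter (fun ρ : Fin r → Bool => i ∈ (tree ρ p).queriesOn x) with hB
  have hsub : Ax \ B ⊆ Ay := by
    intro ρ hρ
    simp only [hAx, hAy, hB, Finset.mem_sdiff, Finset.mem_filter, Finset.mem_univ,
      true_and] at hρ ⊢
    obtain ⟨h1, h2⟩ := hρ
    have : (tree ρ p).eval y = (tree ρ p).eval x := by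
      refine DTree.eval_eq_of_agree _ _ _ (fun j hj => ?_)
      have hne : j ≠ i := fun h => h2 (h ▸ hj)
      simp [hydef, Function.update_of_ne hne]
    rw [this]; exact h1
  have hcardnat : Ax.card ≤ Ay.card + B.card := by
    have h1 : Ax.card - B.card ≤ (Ax \ B).card := Finset.le_card_sdiff B Ax
    have h2 : (Ax \ B).card ≤ Ay.card := Finset.card_le_card hsub
    omega
  -- finish with real arithmetic
  have hAxR : (2 : ℝ) / 3 ≤ (Ax.card : ℝ) / 2 ^ r := hp
  have hAyR : (Ay.card : ℝ) / 2 ^ r ≤ 1 / 3 := hsy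
  have hBR : (3 : ℝ) * B.card < 2 ^ r := by exact_mod_cast hi
  have hcR : (Ax.card : ℝ) ≤ Ay.card + B.card := by exact_mod_cast hcardnat
  have h1 : (2 : ℝ) / 3 * 2 ^ r ≤ Ax.card := (le_div_iff₀ hpowR).mp hAxR
  have h2 : (Ay.card : ℝ) ≤ 1 / 3 * 2 ^ r := by
    rw [div_le_iff₀ hpowR] at hAyR
    linarith
  linarith
end
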